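/- For G = GL_n, identify 𝔠 = Spec K[b_1,…,b_n] and Lie 𝒥_b ≅ ⊕_{i=0}^{n-1} K·T^i where T satisfies T^n − b_1 T^{n-1} + … + (−1)^n b_n = 0. For b ∈ 𝔠(K) with Kostant section x = kos(b) ∈ 𝔤^reg, the derivative of the canonical isomorphism a_x : 𝒥_b ≅ I_x is the ring map da_x : ⊕ c_i T^i ↦ ⊕ c_i x^i, and hence the tautological section τ(b) ∈ Lie 𝒥_b, characterized by da_x(τ(b)) = x, equals T (the class of the variable T). -/

import Mathlib

open Polynomial UniqueFactorizationMonoid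

section Aux
variable {K : Type*} [Field K] {n : ℕ}

lemma aux_mulVec_sum {α : Type*} (s : Finset α) (f : α → (Fin n → K))
    (M : Matrix (Fin n) (Fin n) K) :
    M.mulVec (∑ a ∈ s, f a) = ∑ a ∈ s, M.mulVec (f a) := by
  classical
  induction s using Finset.induction_on with
  | empty => simp [Matrix.mulVec_zero]
  | insert _ _ h ih => simp [Finset.sum_insert h, Matrix.mulVec_add, ih]

lemma aux_sum_mulVec {α : Type*} (s : Finset α) (f : α → Matrix (Fin n) (Fin n) K)
    (v : Fin n → K) :
    (∑ a ∈ s, f a).mulVec v = ∑ a ∈ s, (f a).mulVec v := by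
  classical
  induction s using Finset.induction_on with
  | empty => simp [Matrix.zero_mulVec]
  | insert _ _ h ih => simp [Finset.sum_insert h, Matrix.add_mulVec, ih]

lemma aux_eq_zero_of_mulVec (A : Matrix (Fin n) (Fin n) K) (h : ∀ w, A.mulVec w = 0) :
    A = 0 := by
  ext i j
  have := congrFun (h (Pi.single j 1)) i
  simpa [Matrix.mulVec_single] using this

lemma aux_degree_lt (c : Fin n → K) :
    (∑ i : Fin n, C (c i) * X ^ (i : ℕ)).degree < ((n : ℕ) : WithBot ℕ) := by
  refine lt_of_le_of_lt (Polynomial.degree_sum_le _ _) ?_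
  rw [Finset.sup_lt_iff (by exact_mod_cast WithBot.bot_lt_coe n)]
  intro i _
  exact lt_of_le_of_lt (Polynomial.degree_C_mul_X_pow_le _ _)
    (by exact_mod_cast i.isLt)

lemma aux_poly_eq_zero (x : Matrix (Fin n) (Fin n) K) (c : Fin n → K)
    (h : x.charpoly ∣ ∑ i : Fin n, C (c i) * X ^ (i : ℕ)) :
    (∑ i : Fin n, C (c i) * X ^ (i : ℕ)) = 0 := by
  by_contra hp
  have h1 : x.charpoly.natDegree ≤ (∑ i : Fin n, C (c i) * X ^ (i : ℕ)).natDegree :=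
    Polynomial.natDegree_le_of_dvd h hp
  have h2 : (∑ i : Fin n, C (c i) * X ^ (i : ℕ)).natDegree < n :=
    (Polynomial.natDegree_lt_iff_degree_lt hp).mpr (aux_degree_lt c)
  have h3 : x.charpoly.natDegree = n := by
    simp [x.charpoly_natDegree_eq_dim]
  omega

lemma aux_coeff (c : Fin n → K) (j : Fin n) :
    (∑ i : Fin n, C (c i) * X ^ (i : ℕ)).coeff (j : ℕ) = c j := by
  rw [Polynomial.finset_sum_coeff]
  rw [Finset.sum_eq_single j]
  · simp
  · intro i _ hij
    have : (j : ℕ) ≠ (i : ℕ) := fun h => hij (Fin.val_injective h.symm)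
    simp [Polynomial.coeff_C_mul, Polynomial.coeff_X_pow, this]
  · intro h; exact absurd (Finset.mem_univ j) h

lemma aux_aeval_eval (x : Matrix (Fin n) (Fin n) K) (c : Fin n → K) :
    aeval x (∑ i : Fin n, C (c i) * X ^ (i : ℕ)) = ∑ i : Fin n, c i • x ^ (i : ℕ) := by
  rw [map_sum]
  refine Finset.sum_congr rfl fun i _ => ?_
  rw [map_mul, aeval_C, map_pow, aeval_X, Algebra.smul_def]

/-- Existence of a cyclic vector for a matrix whose charpoly equals its minpoly. -/
lemma aux_exists_cyclic (x : Matrix (Fin n) (Fin n) K)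
    (hreg : x.charpoly = minpoly K x) :
    ∃ v : Fin n → K, ∀ r : K[X], (aeval x r).mulVec v = 0 → x.charpoly ∣ r := by
  classical
  set χ := x.charpoly with hχdef
  have hχ0 : χ ≠ 0 := x.charpoly_monic.ne_zero
  have hdvd : ∀ p : K[X], aeval x p = 0 → χ ∣ p := by
    intro p hp; rw [hreg]; exact minpoly.dvd K x hp
  have haeχ : aeval x χ = 0 := x.aeval_self_charpoly
  set P : Finset K[X] := (normalizedFactors χ).toFinset with hPdef
  have hPprime : ∀ q ∈ P, Prime q := fun q hq =>
    prime_of_normalized_factor q (Multiset.mem_toFinset.mp hq)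
  have hPdvd : ∀ q ∈ P, q ∣ χ := fun q hq =>
    dvd_of_mem_normalizedFactors (Multiset.mem_toFinset.mp hq)
  set t : K[X] → K[X] := fun q => χ / q with htdef
  have ht : ∀ q ∈ P, q * t q = χ := fun q hq =>
    EuclideanDomain.mul_div_cancel' (hPprime q hq).ne_zero (hPdvd q hq)
  have ht0 : ∀ q ∈ P, t q ≠ 0 := by
    intro q hq h0
    apply hχ0
    rw [← ht q hq, h0, mul_zero]
  set m : K[X] → K[X] := fun q => ∏ q' ∈ P.erase q, q' with hmdef
  have hqm : ∀ q ∈ P, ¬ q ∣ m q := by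
    intro q hq hd
    obtain ⟨q', hq', hqq'⟩ := ((hPprime q hq).dvd_finset_prod_iff id).mp hd
    have ha : Associated q q' :=
      ((hPprime q hq).irreducible).associated_of_dvd
        ((hPprime q' (Finset.mem_of_mem_erase hq')).irreducible) hqq'
    have h1 : q = q' := by
      have e1 := normalize_normalized_factor q (Multiset.mem_toFinset.mp hq)
      have e2 := normalize_normalized_factor q'
        (Multiset.mem_toFinset.mp (Finset.mem_of_mem_erase hq'))
      rw [← e1, ← e2]
      exact normalize_eq_normalize ha.dvd ha.symm.dvd
    exact (Finset.ne_of_mem_erase hq') h1.symm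
  have hne : ∀ q ∈ P, ∃ u : Fin n → K, (aeval x (t q * m q)).mulVec u ≠ 0 := by
    intro q hq
    have hA : aeval x (t q * m q) ≠ 0 := by
      intro h0
      have hd : χ ∣ t q * m q := hdvd _ h0
      rw [← ht q hq, mul_comm q (t q)] at hd
      exact hqm q hq ((mul_dvd_mul_iff_left (ht0 q hq)).mp hd)
    by_contra hcon
    push_neg at hcon
    exact hA (aux_eq_zero_of_mulVec _ hcon)
  choose! w hw using hne
  set v : Fin n → K := ∑ q ∈ P, (aeval x (m q)).mulVec (w q) with hvdef
  have hv : ∀ q ∈ P, (aeval x (t q)).mulVec v ≠ 0 := by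
    intro q hq
    rw [hvdef, aux_mulVec_sum]
    have hterm : ∀ q' ∈ P, q' ≠ q →
        (aeval x (t q)).mulVec ((aeval x (m q')).mulVec (w q')) = 0 := by
      intro q' hq'P hq'ne
      have hqmem : q ∈ P.erase q' := Finset.mem_erase.mpr ⟨Ne.symm hq'ne, hq⟩
      have hqd : q ∣ m q' := Finset.dvd_prod_of_mem id hqmem
      obtain ⟨s, hs⟩ := hqd
      have he : t q * m q' = χ * s := by rw [hs, ← ht q hq]; ring
      rw [Matrix.mulVec_mulVec, ← map_mul, he, map_mul, haeχ, zero_mul,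
        Matrix.zero_mulVec]
    rw [Finset.sum_eq_single_of_mem q hq hterm, Matrix.mulVec_mulVec, ← map_mul]
    exact hw q hq
  refine ⟨v, ?_⟩
  intro r hr
  set g := EuclideanDomain.gcd r χ with hgdef
  have hgr : g ∣ r := EuclideanDomain.gcd_dvd_left r χ
  have hgχ : g ∣ χ := EuclideanDomain.gcd_dvd_right r χ
  have hgv : (aeval x g).mulVec v = 0 := by
    have hbez : g = EuclideanDomain.gcdA r χ * r + EuclideanDomain.gcdB r χ * χ := by
      rw [hgdef, EuclideanDomain.gcd_eq_gcd_ab]; ring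
    rw [hbez, map_add, map_mul, map_mul, Matrix.add_mulVec, haeχ, mul_zero,
      Matrix.zero_mulVec, add_zero, ← Matrix.mulVec_mulVec, hr, Matrix.mulVec_zero]
  have hχg : χ ∣ g := by
    by_contra hng
    obtain ⟨h, hh⟩ := hgχ
    have hhu : ¬ IsUnit h := by
      intro hu
      obtain ⟨u, hu'⟩ := hu
      exact hng ⟨(u⁻¹ : K[X]ˣ), by rw [hh, ← hu', mul_assoc, Units.mul_inv, mul_one]⟩
    have hh0 : h ≠ 0 := by
      intro h0; rw [h0, mul_zero] at hh; exact hχ0 hh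
    obtain ⟨q₀, hq₀irr, hq₀h⟩ := WfDvdMonoid.exists_irreducible_factor hhu hh0
    have hq₀χ : q₀ ∣ χ := hh ▸ Dvd.dvd.mul_left hq₀h g
    obtain ⟨q, hqmem, hassoc⟩ := exists_mem_normalizedFactors_of_dvd hχ0 hq₀irr hq₀χ
    have hqP : q ∈ P := Multiset.mem_toFinset.mpr hqmem
    have hqh : q ∣ h := (hassoc.symm.dvd).trans hq₀h
    obtain ⟨h', hh'⟩ := hqh
    have htq : t q = g * h' := by
      have h1 : q * t q = q * (g * h') := by rw [ht q hqP, hh, hh']; ring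
      exact mul_left_cancel₀ (hPprime q hqP).ne_zero h1
    apply hv q hqP
    rw [htq, mul_comm, map_mul, ← Matrix.mulVec_mulVec, hgv, Matrix.mulVec_zero]
  exact hχg.trans hgr

/-- If `y` commutes with `x` and `charpoly x = minpoly x`, then `y` is a polynomial in `x`. -/
lemma aux_exists_poly (x : Matrix (Fin n) (Fin n) K)
    (hreg : x.charpoly = minpoly K x) (y : Matrix (Fin n) (Fin n) K)
    (hxy : x * y = y * x) : ∃ p : K[X], aeval x p = y := by
  classical
  rcases Nat.eq_zero_or_pos n with hn | hn
  · subst hn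
    refine ⟨0, ?_⟩
    ext i j
    exact i.elim0
  haveI : Nonempty (Fin n) := ⟨⟨0, hn⟩⟩
  obtain ⟨v, hv⟩ := aux_exists_cyclic x hreg
  set B : Fin n → (Fin n → K) := fun i => (x ^ (i : ℕ)).mulVec v with hBdef
  have hBli : LinearIndependent K B := by
    rw [Fintype.linearIndependent_iff]
    intro c hc i
    have h1 : (aeval x (∑ i : Fin n, C (c i) * X ^ (i : ℕ))).mulVec v = 0 := by
      rw [aux_aeval_eval, aux_sum_mulVec]
      simpa [hBdef, Matrix.smul_mulVec] using hc
    have h2 := aux_poly_eq_zero x c (hv _ h1)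
    have := aux_coeff c i
    rw [h2] at this
    simpa using this.symm
  have hcard : Fintype.card (Fin n) = Module.finrank K (Fin n → K) := by
    simp [Module.finrank_fin_fun]
  set b := basisOfLinearIndependentOfCardEqFinrank hBli hcard with hbdef
  have hb : ∀ i, b i = B i := fun i =>
    congrFun (coe_basisOfLinearIndependentOfCardEqFinrank hBli hcard) i
  set c : Fin n → K := fun i => b.repr (y.mulVec v) i with hcdef
  have hrepr : ∑ i : Fin n, c i • B i = y.mulVec v := by
    rw [← Module.Basis.sum_repr b (y.mulVec v)]
    exact Finset.sum_congr rfl fun i _ => by rw [hb]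
  set p : K[X] := ∑ i : Fin n, C (c i) * X ^ (i : ℕ) with hpdef
  have hpv : (aeval x p).mulVec v = y.mulVec v := by
    rw [hpdef, aux_aeval_eval, aux_sum_mulVec, ← hrepr]
    exact Finset.sum_congr rfl fun i _ => by
      rw [Matrix.smul_mulVec, hBdef]
  refine ⟨p, ?_⟩
  have hcomm : ∀ i : ℕ, aeval x p * x ^ i = x ^ i * aeval x p := by
    intro i
    have h1 : x ^ i = aeval x ((X : K[X]) ^ i) := by rw [map_pow, aeval_X]
    rw [h1, ← map_mul, ← map_mul, mul_comm]
  have hycomm : ∀ i : ℕ, x ^ i * y = y * x ^ i := fun i =>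
    ((Commute.pow_left (hxy : Commute x y) i)).eq
  apply Matrix.toLin'.injective
  apply b.ext
  intro i
  rw [hb]
  show Matrix.toLin' (aeval x p) (B i) = Matrix.toLin' y (B i)
  rw [Matrix.toLin'_apply, Matrix.toLin'_apply, hBdef]
  calc (aeval x p).mulVec ((x ^ (i : ℕ)).mulVec v)
      = (aeval x p * x ^ (i : ℕ)).mulVec v := Matrix.mulVec_mulVec _ _ _
    _ = (x ^ (i : ℕ) * aeval x p).mulVec v := by rw [hcomm]
    _ = (x ^ (i : ℕ)).mulVec ((aeval x p).mulVec v) := (Matrix.mulVec_mulVec _ _ _).symm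
    _ = (x ^ (i : ℕ)).mulVec (y.mulVec v) := by rw [hpv]
    _ = (x ^ (i : ℕ) * y).mulVec v := Matrix.mulVec_mulVec _ _ _
    _ = (y * x ^ (i : ℕ)).mulVec v := by rw [hycomm]
    _ = y.mulVec ((x ^ (i : ℕ)).mulVec v) := (Matrix.mulVec_mulVec _ _ _).symm

end Aux

/-- The derivative `da_x : Lie 𝒥_b = K[T]/(χ_x) → Mₙ(K)`, `Σ cᵢTⁱ ↦ Σ cᵢxⁱ`
(well defined by Cayley–Hamilton). -/
noncomputable def daX {K : Type*} [Field K] {n : ℕ} (x : Matrix (Fin n) (Fin n) K) :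
    AdjoinRoot x.charpoly →ₐ[K] Matrix (Fin n) (Fin n) K :=
  Ideal.Quotient.liftₐ (Ideal.span {x.charpoly}) (Polynomial.aeval x) (by
    intro a ha
    obtain ⟨c, rfl⟩ := Ideal.mem_span_singleton.mp ha
    rw [map_mul, x.aeval_self_charpoly, zero_mul])

theorem regular_centralizer_GLn_tautological_section
    {K : Type*} [Field K] {n : ℕ}
    (x : Matrix (Fin n) (Fin n) K)
    (hreg : x.charpoly = minpoly K x) :
    Function.Injective (daX x) ∧
      Set.range (daX x) = {y : Matrix (Fin n) (Fin n) K | x * y = y * x} ∧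
      daX x (AdjoinRoot.root x.charpoly) = x ∧
      ∃! τ : AdjoinRoot x.charpoly, daX x τ = x := by
  have hmk : ∀ p : K[X], daX x (AdjoinRoot.mk x.charpoly p) = aeval x p := fun p => rfl
  have hinj : Function.Injective (daX x) := by
    rw [injective_iff_map_eq_zero]
    intro a ha
    obtain ⟨p, rfl⟩ := AdjoinRoot.mk_surjective a
    rw [hmk] at ha
    rw [AdjoinRoot.mk_eq_zero, hreg]
    exact minpoly.dvd K x ha
  have hroot : daX x (AdjoinRoot.root x.charpoly) = x := by
    rw [← AdjoinRoot.mk_X, hmk, aeval_X]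
  refine ⟨hinj, ?_, hroot, ⟨AdjoinRoot.root x.charpoly, hroot, ?_⟩⟩
  · ext y
    constructor
    · rintro ⟨a, rfl⟩
      obtain ⟨p, rfl⟩ := AdjoinRoot.mk_surjective a
      rw [hmk]
      show x * aeval x p = aeval x p * x
      have h1 : x * aeval x p = aeval x (X * p) := by rw [map_mul, aeval_X]
      rw [h1, mul_comm, map_mul, aeval_X]
    · intro hy
      obtain ⟨p, hp⟩ := aux_exists_poly x hreg y hy
      exact ⟨AdjoinRoot.mk x.charpoly p, by rw [hmk, hp]⟩
  · intro τ hτ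
    exact hinj (by rw [hτ, hroot])
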